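/- Let (A•, ∂, ∂_J) be a bigraded structure where ∂, ∂_J are anticommuting differentials on A• := ⊕_p A^p with ∂² = ∂_J² = 0, satisfying the ∂∂_J-lemma: ker ∂ ∩ ker ∂_J ∩ (im ∂ + im ∂_J) = im ∂∂_J. Then the inclusion i : (A• ∩ ker ∂_J, ∂) → (A•, ∂) induces an isomorphism on ∂-cohomology. -/
import Mathlib


/-- **Lemma 4.2.** Let `(A•, ∂, ∂_J)` be a complex with two anticommuting degree-1
differentials (`∂² = ∂_J² = 0`, `∂∂_J + ∂_J∂ = 0`) satisfying the `∂∂_J`-lemma: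
`ker ∂ ∩ ker ∂_J ∩ (im ∂ + im ∂_J) = im ∂∂_J`. Then the inclusion
`i : (A• ∩ ker ∂_J, ∂) → (A•, ∂)` induces an isomorphism on `∂`-cohomology, stated
here by unfolding injectivity and surjectivity of the induced map. -/
theorem inclusion_ker_delJ_quasi_iso
    {V : Type*} [AddCommGroup V] [Module ℂ V]
    (del delJ : Module.End ℂ V)
    (hd2 : del * del = 0) (hdJ2 : delJ * delJ = 0)
    (hanti : del * delJ + delJ * del = 0)
    (hlemma : ∀ α : V, del α = 0 → delJ α = 0 → (∃ β γ : V, α = del β + delJ γ) →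
      ∃ η : V, α = del (delJ η)) :
    -- injectivity of H(i)
    (∀ α : V, delJ α = 0 → del α = 0 → (∃ β : V, α = del β) →
      ∃ γ : V, delJ γ = 0 ∧ α = del γ) ∧
    -- surjectivity of H(i)
    (∀ α : V, del α = 0 → ∃ γ β : V, delJ γ = 0 ∧ α = γ + del β) := by
  have hdJ2' : ∀ x : V, delJ (delJ x) = 0 := fun x => by
    have := congrFun (congrArg DFunLike.coe hdJ2) x; simpa using this
  have hanti' : ∀ x : V, del (delJ x) + delJ (del x) = 0 := fun x => by
    have := congrFun (congrArg DFunLike.coe hanti) x; simpa using this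
  constructor
  · rintro α hJ hD ⟨β, hβ⟩
    obtain ⟨η, hη⟩ := hlemma α hD hJ ⟨β, 0, by simp [hβ]⟩
    exact ⟨delJ η, hdJ2' η, hη⟩
  · intro α hD
    have h1 : del (delJ α) = 0 := by
      have := hanti' α; rw [hD] at this; simpa using this
    obtain ⟨η, hη⟩ := hlemma (delJ α) h1 (hdJ2' α) ⟨0, α, by simp⟩
    refine ⟨α + del η, -η, ?_, by simp⟩
    have := hanti' η
    rw [map_add, hη]
    exact this
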